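/- For a Robertson-Walker metric in coordinates with A = -1, B = a(t)²/(1 + (k/4)r²)², C = 0, D = r²B, the Painlevé-Gullstrand existence condition (d√D)² ≤ 1 is equivalent to k + ȧ(t)² ≥ 0. -/

import Mathlib

set_option maxHeartbeats 1000000 in
/-- For a Robertson-Walker metric with `A = -1`, `B = a²/(1 + kr²/4)²`,
`C = 0`, `D = r²B`, the PG existence condition `(d√D)² ≤ 1` is equivalent
to `k + ȧ² ≥ 0`. -/
theorem RW_PG_condition
    (a : ℝ → ℝ) (ha : Differentiable ℝ a) (hapos : ∀ s, 0 < a s)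
    (k t r : ℝ) (hk : k = 1 ∨ k = 0 ∨ k = -1)
    (hr : 0 < r) (hden : 0 < 1 + k * r ^ 2 / 4)
    (D B : ℝ → ℝ → ℝ)
    (hD : ∀ s ρ, D s ρ = ρ ^ 2 * (a s) ^ 2 / (1 + k * ρ ^ 2 / 4) ^ 2)
    (hB : ∀ s ρ, B s ρ = (a s) ^ 2 / (1 + k * ρ ^ 2 / 4) ^ 2)
    (sdD2 : ℝ)
    (hsdD2 : sdD2
      = -(deriv (fun s => Real.sqrt (D s r)) t) ^ 2
        + 1 / B t r * (deriv (fun ρ => Real.sqrt (D t ρ)) r) ^ 2) :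
    sdD2 ≤ 1 ↔ 0 ≤ k + (deriv a t) ^ 2 := by
  have hdne : (1 + k * r ^ 2 / 4) ≠ 0 := ne_of_gt hden
  have hA : 0 < a t := hapos t
  -- time derivative
  have h1 : (fun s => Real.sqrt (D s r)) = fun s => r * a s / (1 + k * r ^ 2 / 4) := by
    funext s
    have : D s r = (r * a s / (1 + k * r ^ 2 / 4)) ^ 2 := by
      rw [hD]; field_simp
    rw [this, Real.sqrt_sq]
    exact div_nonneg (mul_nonneg hr.le (hapos s).le) hden.le
  have hderiv_t : deriv (fun s => Real.sqrt (D s r)) t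
      = r * deriv a t / (1 + k * r ^ 2 / 4) := by
    rw [h1]
    have : (fun s => r * a s / (1 + k * r ^ 2 / 4))
        = fun s => (r / (1 + k * r ^ 2 / 4)) * a s := by
      funext s; ring
    rw [this, deriv_const_mul _ (ha t)]
    ring
  -- radial derivative
  have h2 : (fun ρ => Real.sqrt (D t ρ)) =ᶠ[nhds r]
      fun ρ => ρ * a t / (1 + k * ρ ^ 2 / 4) := by
    have hcont : ContinuousAt (fun ρ : ℝ => 1 + k * ρ ^ 2 / 4) r := by fun_prop
    have hev1 : ∀ᶠ ρ in nhds r, 0 < 1 + k * ρ ^ 2 / 4 :=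
      hcont.eventually (eventually_gt_nhds hden)
    have hev2 : ∀ᶠ ρ in nhds r, 0 < ρ := eventually_gt_nhds hr
    filter_upwards [hev1, hev2] with ρ hp1 hp2
    have : D t ρ = (ρ * a t / (1 + k * ρ ^ 2 / 4)) ^ 2 := by
      rw [hD]; field_simp [ne_of_gt hp1]
    rw [this, Real.sqrt_sq]
    exact div_nonneg (mul_nonneg hp2.le hA.le) hp1.le
  have hderiv_r : deriv (fun ρ => Real.sqrt (D t ρ)) r
      = a t * (1 - k * r ^ 2 / 4) / (1 + k * r ^ 2 / 4) ^ 2 := by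
    rw [h2.deriv_eq]
    have hnum : HasDerivAt (fun ρ : ℝ => ρ * a t) (a t) r := by
      simpa using (hasDerivAt_id r).mul_const (a t)
    have hd0 : HasDerivAt (fun ρ : ℝ => 1 + k * ρ ^ 2 / 4)
        (k * ((2 : ℕ) * r ^ (2 - 1)) / 4) r :=
      (((hasDerivAt_pow 2 r).const_mul k).div_const 4).const_add 1
    have hden' : HasDerivAt (fun ρ : ℝ => 1 + k * ρ ^ 2 / 4) (k * r / 2) r := by
      convert hd0 using 1; norm_num; ring
    rw [show (fun ρ => ρ * a t / (1 + k * ρ ^ 2 / 4)) = (fun ρ => ρ * a t) / (fun ρ => 1 + k * ρ ^ 2 / 4) from rfl, (hnum.div hden' hdne).deriv]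
    congr 1
    ring
  -- algebraic simplification
  have hs : sdD2 = (-(deriv a t ^ 2 * r ^ 2) + (1 - k * r ^ 2 / 4) ^ 2)
      / (1 + k * r ^ 2 / 4) ^ 2 := by
    have hAne : a t ≠ 0 := ne_of_gt hA
    have hterm : 1 / (a t ^ 2 / (1 + k * r ^ 2 / 4) ^ 2)
        * (a t * (1 - k * r ^ 2 / 4) / (1 + k * r ^ 2 / 4) ^ 2) ^ 2
        = (1 - k * r ^ 2 / 4) ^ 2 / (1 + k * r ^ 2 / 4) ^ 2 := by
      rw [one_div_div, div_pow, div_mul_div_comm,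
        div_eq_div_iff
          (mul_ne_zero (pow_ne_zero 2 hAne) (pow_ne_zero 2 (pow_ne_zero 2 hdne)))
          (pow_ne_zero 2 hdne)]
      ring
    rw [hsdD2, hderiv_t, hderiv_r, hB, hterm]
    field_simp
  rw [hs, div_le_one (by positivity)]
  constructor
  · intro h
    nlinarith [mul_pos hr hr, sq_nonneg (deriv a t)]
  · intro h
    nlinarith [mul_pos hr hr]
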